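/- Let d ∈ ℕ, v ∈ ℂ^d, θ ∈ ℝ, and let μ be a Borel measure on U_d := [0,∞)^d∖{0} with ∫_{U_d}‖z‖² μ(dz) < ∞. For w ≥ 0 and z ∈ U_d set g_z(w) := (Re(e^{iθw} ⟨v,z⟩), Im(e^{iθw} ⟨v,z⟩))^⊤ ∈ ℝ². Then, as t → ∞, (1/t)∫_0^t ∫_{U_d} g_z(w) g_z(w)^⊤ μ(dz) dw converges to (1/2)(∫_{U_d}|⟨v,z⟩|² μ(dz)) I_2 + (1/2)·[[Re(∫_{U_d}⟨v,z⟩² μ(dz)), Im(∫_{U_d}⟨v,z⟩² μ(dz))],[Im(∫_{U_d}⟨v,z⟩² μ(dz)), −Re(∫_{U_d}⟨v,z⟩² μ(dz))]]·1_{θ=0}. -/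

import Mathlib

open MeasureTheory Filter
open scoped ENNReal

/-- The pairing `⟨v,z⟩ = ∑ j, v j * z j` of `v ∈ ℂ^d` with `z ∈ ℝ^d`. -/
noncomputable def pairCV {d : ℕ} (v : Fin d → ℂ) (z : Fin d → ℝ) : ℂ :=
  ∑ j, v j * (z j : ℂ)

lemma pairCV_continuous {d : ℕ} (v : Fin d → ℂ) : Continuous (pairCV v) := by
  unfold pairCV
  exact continuous_finset_sum _ fun j _ => continuous_const.mul
    (Complex.continuous_ofReal.comp (continuous_apply j))

lemma pairCV_abs_le {d : ℕ} (v : Fin d → ℂ) (z : Fin d → ℝ) :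
    ‖pairCV v z‖ ≤ (∑ j, ‖v j‖) * ‖z‖ := by
  calc ‖pairCV v z‖ ≤ ∑ j, ‖v j * (z j : ℂ)‖ :=
        by exact norm_sum_le Finset.univ (fun j => v j * (z j : ℂ))
    _ ≤ (∑ j, ‖v j‖) * ‖z‖ := by
        rw [Finset.sum_mul]
        refine Finset.sum_le_sum fun j _ => ?_
        rw [norm_mul, Complex.norm_real]
        exact mul_le_mul_of_nonneg_left (by simpa using norm_le_pi_norm z j) (norm_nonneg _)

lemma integrable_norm_sq {d : ℕ} (μ : Measure (Fin d → ℝ))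
    (hmom : ∫⁻ z, (‖z‖₊ : ℝ≥0∞) ^ 2 ∂μ < ⊤) :
    Integrable (fun z : Fin d → ℝ => ‖z‖^2) μ := by
  refine ⟨(continuous_norm.pow 2).aestronglyMeasurable, ?_⟩
  simpa [HasFiniteIntegral, nnnorm_pow, nnnorm_norm, ENNReal.coe_pow, ← enorm_eq_nnnorm] using hmom

lemma integrable_of_sq_bound {d : ℕ} {E : Type*} [NormedAddCommGroup E] (μ : Measure (Fin d → ℝ))
    (hmom : ∫⁻ z, (‖z‖₊ : ℝ≥0∞) ^ 2 ∂μ < ⊤) {f : (Fin d → ℝ) → E} (hf : Continuous f)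
    {C : ℝ} (hC : ∀ z, ‖f z‖ ≤ C * ‖z‖^2) : Integrable f μ := by
  refine Integrable.mono' ((integrable_norm_sq μ hmom).const_mul C) hf.aestronglyMeasurable ?_
  exact Filter.Eventually.of_forall hC

lemma cesaro {a C : ℝ} {F : ℝ → ℝ} (h : ∀ t, |F t - a * t| ≤ C) :
    Tendsto (fun t => (1/t) * F t) atTop (nhds a) := by
  have h0 : Tendsto (fun t => (F t - a*t)/t) atTop (nhds 0) := by
    refine squeeze_zero_norm' (a := fun t => C / t) ?_ (tendsto_const_nhds.div_atTop tendsto_id)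
    filter_upwards [eventually_ge_atTop (1:ℝ)] with t ht
    have ht0 : (0:ℝ) < t := by linarith
    rw [norm_div, Real.norm_eq_abs, Real.norm_eq_abs, abs_of_pos ht0]
    exact div_le_div_of_nonneg_right (h t) ht0.le
  have heq : ∀ᶠ t in atTop, a + (F t - a*t)/t = (1/t) * F t := by
    filter_upwards [eventually_gt_atTop (0:ℝ)] with t ht
    field_simp
    ring
  have := (tendsto_const_nhds.add h0).congr' heq
  simpa using this

lemma ptRe (e c : ℂ) (he : ‖e‖ = 1) :
    ((e*c).re)^2 = ((‖c‖)^2 + ((e^2)*(c^2)).re)/2 := by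
  have h1 : (‖e*c‖)^2 = (e*c).re^2 + (e*c).im^2 := by
    rw [Complex.sq_norm, Complex.normSq_apply]; ring
  have h2 : ((e^2)*(c^2)).re = (e*c).re^2 - (e*c).im^2 := by
    have h : (e^2)*(c^2) = (e*c)*(e*c) := by ring
    rw [h, Complex.mul_re]; ring
  rw [norm_mul, he, one_mul] at h1
  nlinarith [h1, h2]

lemma ptIm (e c : ℂ) (he : ‖e‖ = 1) :
    ((e*c).im)^2 = ((‖c‖)^2 - ((e^2)*(c^2)).re)/2 := by
  have h1 : (‖e*c‖)^2 = (e*c).re^2 + (e*c).im^2 := by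
    rw [Complex.sq_norm, Complex.normSq_apply]; ring
  have h2 : ((e^2)*(c^2)).re = (e*c).re^2 - (e*c).im^2 := by
    have h : (e^2)*(c^2) = (e*c)*(e*c) := by ring
    rw [h, Complex.mul_re]; ring
  rw [norm_mul, he, one_mul] at h1
  nlinarith [h1, h2]

lemma ptMix (e c : ℂ) :
    (e*c).re * (e*c).im = ((e^2)*(c^2)).im/2 := by
  simp only [pow_two, Complex.mul_im, Complex.mul_re]
  ring

lemma zint {d : ℕ} {μ : Measure (Fin d → ℝ)} {v : Fin d → ℂ}
    (hI2 : Integrable (fun z => (pairCV v z)^2) μ)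
    (hIA : Integrable (fun z => ‖pairCV v z‖^2) μ)
    (e : ℂ) (he : ‖e‖ = 1) :
    (∫ z, ((e * pairCV v z).re)^2 ∂μ)
        = ((∫ z, ‖pairCV v z‖^2 ∂μ) + (e^2 * ∫ z, (pairCV v z)^2 ∂μ).re)/2
    ∧ (∫ z, (e * pairCV v z).re * (e * pairCV v z).im ∂μ)
        = (e^2 * ∫ z, (pairCV v z)^2 ∂μ).im/2
    ∧ (∫ z, ((e * pairCV v z).im)^2 ∂μ)
        = ((∫ z, ‖pairCV v z‖^2 ∂μ) - (e^2 * ∫ z, (pairCV v z)^2 ∂μ).re)/2 := by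
  have hmul : Integrable (fun z => e^2 * (pairCV v z)^2) μ := hI2.const_mul _
  have hmulre : Integrable (fun z => (e^2 * (pairCV v z)^2).re) μ := by
    simpa using hmul.re
  have hre : ∫ z, (e^2 * (pairCV v z)^2).re ∂μ = (e^2 * ∫ z, (pairCV v z)^2 ∂μ).re := by
    rw [← integral_const_mul]
    simpa using integral_re hmul
  have him : ∫ z, (e^2 * (pairCV v z)^2).im ∂μ = (e^2 * ∫ z, (pairCV v z)^2 ∂μ).im := by
    rw [← integral_const_mul]
    simpa using integral_im hmul
  refine ⟨?_, ?_, ?_⟩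
  · have h : (fun z => ((e * pairCV v z).re)^2)
        = fun z => ‖pairCV v z‖^2/2 + (e^2 * (pairCV v z)^2).re/2 := by
      funext z; rw [ptRe _ _ he]; ring
    rw [h, integral_add (hIA.div_const 2) (hmulre.div_const 2), integral_div, integral_div, hre]
    ring
  · have h : (fun z => (e * pairCV v z).re * (e * pairCV v z).im)
        = fun z => (e^2 * (pairCV v z)^2).im/2 := by
      funext z; rw [ptMix]
    rw [h, integral_div, him]
  · have h : (fun z => ((e * pairCV v z).im)^2)
        = fun z => ‖pairCV v z‖^2/2 - (e^2 * (pairCV v z)^2).re/2 := by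
      funext z; rw [ptIm _ _ he]; ring
    rw [h, integral_sub (hIA.div_const 2) (hmulre.div_const 2), integral_div, integral_div, hre]
    ring

lemma entry_tendsto (θ p q r : ℝ) :
    Tendsto (fun t => (1/t) * ∫ w in (0:ℝ)..t,
        (p + q * Real.cos (2*θ*w) + r * Real.sin (2*θ*w)))
      atTop (nhds (p + (if θ = 0 then q else 0))) := by
  have hcos : Continuous fun w : ℝ => Real.cos (2*θ*w) :=
    Real.continuous_cos.comp (continuous_const.mul continuous_id)
  have hsin : Continuous fun w : ℝ => Real.sin (2*θ*w) :=
    Real.continuous_sin.comp (continuous_const.mul continuous_id)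
  have hint : ∀ t : ℝ, ∫ w in (0:ℝ)..t, (p + q * Real.cos (2*θ*w) + r * Real.sin (2*θ*w))
      = p*t + q * (∫ w in (0:ℝ)..t, Real.cos (2*θ*w)) + r * (∫ w in (0:ℝ)..t, Real.sin (2*θ*w)) := by
    intro t
    have h1 : IntervalIntegrable (fun w => q * Real.cos (2*θ*w)) MeasureTheory.volume 0 t :=
      (continuous_const.mul hcos).intervalIntegrable _ _
    have h2 : IntervalIntegrable (fun w => r * Real.sin (2*θ*w)) MeasureTheory.volume 0 t :=
      (continuous_const.mul hsin).intervalIntegrable _ _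
    rw [intervalIntegral.integral_add (intervalIntegrable_const.add h1) h2,
        intervalIntegral.integral_add intervalIntegrable_const h1,
        intervalIntegral.integral_const, intervalIntegral.integral_const_mul,
        intervalIntegral.integral_const_mul]
    simp [smul_eq_mul]
    ring
  by_cases hθ : θ = 0
  · subst hθ
    simp only [if_pos rfl]
    apply cesaro (C := 0)
    intro t
    rw [hint t]
    simp
    ring
  · simp only [if_neg hθ, add_zero]
    have hb0 : (2*θ) ≠ 0 := by simp [hθ]
    have hCs : ∀ t : ℝ, ∫ w in (0:ℝ)..t, Real.cos (2*θ*w) = Real.sin (2*θ*t) / (2*θ) := by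
      intro t
      rw [intervalIntegral.integral_comp_mul_left Real.cos hb0]
      simp [integral_cos, smul_eq_mul]
      ring
    have hSn : ∀ t : ℝ, ∫ w in (0:ℝ)..t, Real.sin (2*θ*w) = (1 - Real.cos (2*θ*t)) / (2*θ) := by
      intro t
      rw [intervalIntegral.integral_comp_mul_left Real.sin hb0]
      simp [integral_sin, smul_eq_mul]
      ring
    apply cesaro (C := (|q| + 2*|r|)/|2*θ|)
    intro t
    rw [hint t, hCs t, hSn t,
      show p*t + q * (Real.sin (2*θ*t)/(2*θ)) + r * ((1 - Real.cos (2*θ*t))/(2*θ)) - p*t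
        = q * (Real.sin (2*θ*t)/(2*θ)) + r * ((1 - Real.cos (2*θ*t))/(2*θ)) from by ring]
    have h1 : |Real.sin (2*θ*t)| ≤ 1 := Real.abs_sin_le_one _
    have h2 : |1 - Real.cos (2*θ*t)| ≤ 2 := by
      have ha := Real.neg_one_le_cos (2*θ*t)
      have hbb := Real.cos_le_one (2*θ*t)
      rw [abs_le]; constructor <;> linarith
    have hbpos : (0:ℝ) < |2*θ| := abs_pos.2 hb0
    calc |q * (Real.sin (2*θ*t)/(2*θ)) + r * ((1 - Real.cos (2*θ*t))/(2*θ))|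
        ≤ |q * (Real.sin (2*θ*t)/(2*θ))| + |r * ((1 - Real.cos (2*θ*t))/(2*θ))| := abs_add_le _ _
      _ = (|q| * |Real.sin (2*θ*t)| + |r| * |1 - Real.cos (2*θ*t)|) / |2*θ| := by
          rw [abs_mul, abs_mul, abs_div, abs_div]; ring
      _ ≤ (|q| * 1 + |r| * 2) / |2*θ| := by
          gcongr
      _ = (|q| + 2*|r|)/|2*θ| := by ring

lemma matrix_tendsto {f g h : ℝ → ℝ} {la lb lc : ℝ}
    (hf : Tendsto f atTop (nhds la)) (hg : Tendsto g atTop (nhds lb))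
    (hh : Tendsto h atTop (nhds lc)) :
    Tendsto (fun t => !![f t, g t; g t, h t]) atTop (nhds !![la, lb; lb, lc]) := by
  apply tendsto_pi_nhds.2
  intro i
  rw [tendsto_pi_nhds]
  intro j
  fin_cases i <;> fin_cases j <;> simpa

lemma smul_matrix (x a b c d' : ℝ) : x • !![a,b;c,d'] = !![x*a, x*b; x*c, x*d'] := by
  ext i j; fin_cases i <;> fin_cases j <;> simp

/-- Let `μ` be a Borel measure on `U_d = [0,∞)^d \ {0}` with `∫ ‖z‖² dμ < ∞`, `v ∈ ℂ^d`, `θ ∈ ℝ`.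
With `g_z(w) = (Re(e^{iθw} ⟨v,z⟩), Im(e^{iθw} ⟨v,z⟩))ᵀ`, the Cesàro averages
`(1/t) ∫_0^t ∫_{U_d} g_z(w) g_z(w)ᵀ μ(dz) dw` converge, as `t → ∞`, to
`(1/2)(∫|⟨v,z⟩|²dμ) I₂ + (1/2)[[Re ∫⟨v,z⟩²dμ, Im ∫⟨v,z⟩²dμ],[Im ∫⟨v,z⟩²dμ, -Re ∫⟨v,z⟩²dμ]]·1_{θ=0}`. -/
theorem stmt12 (d : ℕ) (v : Fin d → ℂ) (θ : ℝ) (μ : Measure (Fin d → ℝ))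
    (hsupp : μ {z | ¬ ((∀ i, 0 ≤ z i) ∧ z ≠ 0)} = 0)
    (hmom : ∫⁻ z, (‖z‖₊ : ℝ≥0∞) ^ 2 ∂μ < ⊤) :
    Tendsto
      (fun t : ℝ => (1 / t) •
        !![∫ w in (0:ℝ)..t, ∫ z, ((Complex.exp (Complex.I * (θ * w)) * pairCV v z).re) ^ 2 ∂μ,
           ∫ w in (0:ℝ)..t, ∫ z, (Complex.exp (Complex.I * (θ * w)) * pairCV v z).re *
             (Complex.exp (Complex.I * (θ * w)) * pairCV v z).im ∂μ;
           ∫ w in (0:ℝ)..t, ∫ z, (Complex.exp (Complex.I * (θ * w)) * pairCV v z).re *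
             (Complex.exp (Complex.I * (θ * w)) * pairCV v z).im ∂μ,
           ∫ w in (0:ℝ)..t, ∫ z, ((Complex.exp (Complex.I * (θ * w)) * pairCV v z).im) ^ 2 ∂μ])
      atTop
      (nhds (((∫ z, ‖pairCV v z‖ ^ 2 ∂μ) / 2) • (1 : Matrix (Fin 2) (Fin 2) ℝ)
        + (if θ = 0 then
            (1 / 2 : ℝ) •
              !![(∫ z, (pairCV v z) ^ 2 ∂μ).re, (∫ z, (pairCV v z) ^ 2 ∂μ).im;
                 (∫ z, (pairCV v z) ^ 2 ∂μ).im, -(∫ z, (pairCV v z) ^ 2 ∂μ).re]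
          else 0))) := by
  have hcont := pairCV_continuous v
  set K := ∑ j, ‖v j‖ with hK
  have hb : ∀ z, ‖pairCV v z‖ ≤ K * ‖z‖ := pairCV_abs_le v
  have habs2 : ∀ z : Fin d → ℝ, ‖pairCV v z‖^2 ≤ K^2 * ‖z‖^2 := by
    intro z
    calc ‖pairCV v z‖^2 ≤ (K * ‖z‖)^2 :=
        pow_le_pow_left₀ (norm_nonneg _) (hb z) 2
      _ = K^2 * ‖z‖^2 := by ring
  have hI2 : Integrable (fun z => (pairCV v z)^2) μ := by
    apply integrable_of_sq_bound μ hmom (hcont.pow 2) (C := K^2)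
    intro z
    simp only [Pi.pow_apply]
    rw [norm_pow]
    exact habs2 z
  have hIA : Integrable (fun z => ‖pairCV v z‖^2) μ := by
    apply integrable_of_sq_bound μ hmom ((continuous_norm.comp hcont).pow 2) (C := K^2)
    intro z
    simp only [Pi.pow_apply, Function.comp_apply]
    rw [Real.norm_eq_abs, abs_of_nonneg (by positivity)]
    exact habs2 z
  set S := ∫ z, (pairCV v z)^2 ∂μ with hS
  set A := ∫ z, ‖pairCV v z‖^2 ∂μ with hA
  have heabs : ∀ w : ℝ, ‖Complex.exp (Complex.I * (θ * w))‖ = 1 := by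
    intro w; rw [Complex.norm_exp]; simp
  have he2 : ∀ w : ℝ, (Complex.exp (Complex.I * (θ * w)))^2 * S
      = ((Real.cos (2*θ*w) : ℂ) + (Real.sin (2*θ*w) : ℂ) * Complex.I) * S := by
    intro w
    congr 1
    rw [sq, ← Complex.exp_add,
      show Complex.I * (θ * w) + Complex.I * (θ * w) = ((2*θ*w : ℝ) : ℂ) * Complex.I by
        push_cast; ring,
      Complex.exp_mul_I, ← Complex.ofReal_cos, ← Complex.ofReal_sin]
  have hre2 : ∀ w : ℝ, ((Complex.exp (Complex.I * (θ * w)))^2 * S).re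
      = Real.cos (2*θ*w) * S.re - Real.sin (2*θ*w) * S.im := by
    intro w
    rw [he2 w]
    simp only [Complex.mul_re, Complex.mul_im, Complex.add_re, Complex.add_im,
      Complex.ofReal_re, Complex.ofReal_im, Complex.I_re, Complex.I_im]
    ring
  have him2 : ∀ w : ℝ, ((Complex.exp (Complex.I * (θ * w)))^2 * S).im
      = Real.sin (2*θ*w) * S.re + Real.cos (2*θ*w) * S.im := by
    intro w
    rw [he2 w]
    simp only [Complex.mul_re, Complex.mul_im, Complex.add_re, Complex.add_im,
      Complex.ofReal_re, Complex.ofReal_im, Complex.I_re, Complex.I_im]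
    ring
  have h11 : ∀ w : ℝ, (∫ z, ((Complex.exp (Complex.I * (θ * w)) * pairCV v z).re)^2 ∂μ)
      = A/2 + (S.re/2) * Real.cos (2*θ*w) + (-(S.im/2)) * Real.sin (2*θ*w) := by
    intro w
    rw [(zint hI2 hIA _ (heabs w)).1, ← hS, ← hA, hre2 w]
    ring
  have h12 : ∀ w : ℝ, (∫ z, (Complex.exp (Complex.I * (θ * w)) * pairCV v z).re *
        (Complex.exp (Complex.I * (θ * w)) * pairCV v z).im ∂μ)
      = 0 + (S.im/2) * Real.cos (2*θ*w) + (S.re/2) * Real.sin (2*θ*w) := by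
    intro w
    rw [(zint hI2 hIA _ (heabs w)).2.1, ← hS, him2 w]
    ring
  have h22 : ∀ w : ℝ, (∫ z, ((Complex.exp (Complex.I * (θ * w)) * pairCV v z).im)^2 ∂μ)
      = A/2 + (-(S.re/2)) * Real.cos (2*θ*w) + (S.im/2) * Real.sin (2*θ*w) := by
    intro w
    rw [(zint hI2 hIA _ (heabs w)).2.2, ← hS, ← hA, hre2 w]
    ring
  have hL : (A / 2) • (1 : Matrix (Fin 2) (Fin 2) ℝ)
        + (if θ = 0 then (1/2 : ℝ) • !![S.re, S.im; S.im, -S.re] else 0)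
      = !![A/2 + (if θ = 0 then S.re/2 else 0), 0 + (if θ = 0 then S.im/2 else 0);
           0 + (if θ = 0 then S.im/2 else 0), A/2 + (if θ = 0 then -(S.re/2) else 0)] := by
    by_cases hθ : θ = 0 <;>
      simp only [hθ, if_pos, if_true, if_neg, if_false, not_false_iff] <;>
      ext i j <;> fin_cases i <;> fin_cases j <;>
      simp [Matrix.one_apply] <;> ring
  rw [hL]
  simp only [h11, h12, h22, smul_matrix]
  exact matrix_tendsto (entry_tendsto θ (A/2) (S.re/2) (-(S.im/2)))
    (entry_tendsto θ 0 (S.im/2) (S.re/2))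
    (entry_tendsto θ (A/2) (-(S.re/2)) (S.im/2))
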